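/- Let W = k⟨e₁₁, e₁₂, e₂₁⟩/(e₁₂e₁₁ − q e₁₁e₁₂, e₂₁e₁₁ − q e₁₁e₂₁, e₂₁e₁₂ − e₁₂e₂₁, e₁₁^{2m} − 1, e₁₂ᵐ, e₂₁ᵐ) where q has order 2m. Then W has k-linear basis {e₁₁ⁱ e₁₂ʲ e₂₁ˡ : 0 ≤ i ≤ 2m−1, 0 ≤ j, l ≤ m−1}, hence dim_k W = 2m³; moreover W is ℕ-graded with deg e₁₁ = 0, deg e₁₂ = deg e₂₁ = 1, and every two-sided ideal of W is graded. -/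

import Mathlib

/-- The defining relations of
`W = k⟨e₁₁, e₁₂, e₂₁⟩/(e₁₂e₁₁ − qe₁₁e₁₂, e₂₁e₁₁ − qe₁₁e₂₁, e₂₁e₁₂ − e₁₂e₂₁,
e₁₁^{2m} − 1, e₁₂ᵐ, e₂₁ᵐ)`, with generators indexed `0 ↦ e₁₁`, `1 ↦ e₁₂`, `2 ↦ e₂₁`. -/
inductive WRel (k : Type*) [Field k] (q : k) (m : ℕ) :
    FreeAlgebra k (Fin 3) → FreeAlgebra k (Fin 3) → Prop
  | r1 : WRel k q m (FreeAlgebra.ι k 1 * FreeAlgebra.ι k 0)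
      (q • (FreeAlgebra.ι k 0 * FreeAlgebra.ι k (1 : Fin 3)))
  | r2 : WRel k q m (FreeAlgebra.ι k 2 * FreeAlgebra.ι k 0)
      (q • (FreeAlgebra.ι k 0 * FreeAlgebra.ι k (2 : Fin 3)))
  | r3 : WRel k q m (FreeAlgebra.ι k 2 * FreeAlgebra.ι k 1)
      (FreeAlgebra.ι k 1 * FreeAlgebra.ι k (2 : Fin 3))
  | r4 : WRel k q m ((FreeAlgebra.ι k (0 : Fin 3)) ^ (2 * m)) 1
  | r5 : WRel k q m ((FreeAlgebra.ι k (1 : Fin 3)) ^ m) 0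
  | r6 : WRel k q m ((FreeAlgebra.ι k (2 : Fin 3)) ^ m) 0

/-- The algebra `W` (the dual of the double Frobenius–Lusztig kernel
`u_{2,q}(sl₂)°`, presented as above). -/
abbrev Walg (k : Type*) [Field k] (q : k) (m : ℕ) := RingQuot (WRel k q m)

/-- The images of the generators `e₁₁, e₁₂, e₂₁` in `W`. -/
noncomputable def Wgen (k : Type*) [Field k] (q : k) (m : ℕ) (i : Fin 3) :
    Walg k q m :=
  RingQuot.mkAlgHom k (WRel k q m) (FreeAlgebra.ι k i)


namespace Stmt18Aux

variable {k : Type*} [Field k] {q : k} {m : ℕ}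

/-- The index type for the PBW-type basis. -/
abbrev Ix (m : ℕ) := Fin (2 * m) × Fin m × Fin m

/-- The basis monomials of `W`. -/
noncomputable def Wmono (q : k) (m : ℕ) (p : Ix m) : Walg k q m :=
  Wgen k q m 0 ^ (p.1 : ℕ) * Wgen k q m 1 ^ (p.2.1 : ℕ) * Wgen k q m 2 ^ (p.2.2 : ℕ)

section Relations

lemma rel1 : Wgen k q m 1 * Wgen k q m 0 = q • (Wgen k q m 0 * Wgen k q m 1) := by
  have := RingQuot.mkAlgHom_rel k (WRel.r1 (k := k) (q := q) (m := m))
  simpa [Wgen, map_mul] using this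

lemma rel2 : Wgen k q m 2 * Wgen k q m 0 = q • (Wgen k q m 0 * Wgen k q m 2) := by
  have := RingQuot.mkAlgHom_rel k (WRel.r2 (k := k) (q := q) (m := m))
  simpa [Wgen, map_mul] using this

lemma rel3 : Wgen k q m 2 * Wgen k q m 1 = Wgen k q m 1 * Wgen k q m 2 := by
  have := RingQuot.mkAlgHom_rel k (WRel.r3 (k := k) (q := q) (m := m))
  simpa [Wgen, map_mul] using this

lemma rel4 : Wgen k q m 0 ^ (2 * m) = 1 := by
  have := RingQuot.mkAlgHom_rel k (WRel.r4 (k := k) (q := q) (m := m))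
  simpa [Wgen, map_pow] using this

lemma rel5 : Wgen k q m 1 ^ m = 0 := by
  have := RingQuot.mkAlgHom_rel k (WRel.r5 (k := k) (q := q) (m := m))
  simpa [Wgen, map_pow] using this

lemma rel6 : Wgen k q m 2 ^ m = 0 := by
  have := RingQuot.mkAlgHom_rel k (WRel.r6 (k := k) (q := q) (m := m))
  simpa [Wgen, map_pow] using this

/-- If `a * b = c • (b * a)` then `a * b ^ i = c ^ i • (b ^ i * a)`. -/
lemma comm_pow_left {A : Type*} [Ring A] [Algebra k A] {a b : A} {c : k}
    (h : a * b = c • (b * a)) (i : ℕ) : a * b ^ i = c ^ i • (b ^ i * a) := by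
  induction i with
  | zero => simp
  | succ i ih =>
    rw [pow_succ, ← mul_assoc, ih, smul_mul_assoc, mul_assoc, h, mul_smul_comm,
      smul_smul, pow_succ, ← mul_assoc, mul_comm (c ^ i) c]

/-- If `a * b = c • (b * a)` then `a ^ i * b = c ^ i • (b * a ^ i)`. -/
lemma comm_pow_right {A : Type*} [Ring A] [Algebra k A] {a b : A} {c : k}
    (h : a * b = c • (b * a)) (i : ℕ) : a ^ i * b = c ^ i • (b * a ^ i) := by
  induction i with
  | zero => simp
  | succ i ih =>
    rw [pow_succ', mul_assoc, ih, mul_smul_comm, ← mul_assoc, h, smul_mul_assoc,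
      smul_smul, mul_assoc, ← pow_succ, pow_succ']

lemma pow_mod_eq {A : Type*} [Monoid A] {a : A} {n : ℕ} (h : a ^ n = 1) (x : ℕ) :
    a ^ (x % n) = a ^ x := by
  conv_rhs => rw [← Nat.mod_add_div x n]
  rw [pow_add, pow_mul, h, one_pow, mul_one]

end Relations


section Rep

variable (q : k) (m : ℕ)

/-- The basis of the model space. -/
noncomputable def bV : Module.Basis (Ix m) k (Ix m → k) := Pi.basisFun k (Ix m)

/-- The operator representing `e₁₁`. -/
noncomputable def E0V [NeZero (2 * m)] : Module.End k (Ix m → k) :=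
  (bV (k := k) m).constr k fun p => bV (k := k) m (p.1 + 1, p.2)

/-- The operator representing `e₁₂`. -/
noncomputable def E1V : Module.End k (Ix m → k) :=
  (bV (k := k) m).constr k fun p =>
    if h : (p.2.1 : ℕ) + 1 < m then
      q ^ (p.1 : ℕ) • bV (k := k) m (p.1, ⟨(p.2.1 : ℕ) + 1, h⟩, p.2.2) else 0

/-- The operator representing `e₂₁`. -/
noncomputable def E2V : Module.End k (Ix m → k) :=
  (bV (k := k) m).constr k fun p =>
    if h : (p.2.2 : ℕ) + 1 < m then
      q ^ (p.1 : ℕ) • bV (k := k) m (p.1, p.2.1, ⟨(p.2.2 : ℕ) + 1, h⟩) else 0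

variable {m}

lemma E0V_apply [NeZero (2 * m)] (p : Ix m) :
    E0V (k := k) m (bV (k := k) m p) = bV (k := k) m (p.1 + 1, p.2) :=
  Module.Basis.constr_basis _ _ _ _

lemma E1V_apply (p : Ix m) :
    E1V q m (bV (k := k) m p) =
      if h : (p.2.1 : ℕ) + 1 < m then
        q ^ (p.1 : ℕ) • bV (k := k) m (p.1, ⟨(p.2.1 : ℕ) + 1, h⟩, p.2.2) else 0 :=
  Module.Basis.constr_basis _ _ _ _

lemma E2V_apply (p : Ix m) :
    E2V q m (bV (k := k) m p) =
      if h : (p.2.2 : ℕ) + 1 < m then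
        q ^ (p.1 : ℕ) • bV (k := k) m (p.1, p.2.1, ⟨(p.2.2 : ℕ) + 1, h⟩) else 0 :=
  Module.Basis.constr_basis _ _ _ _

lemma E0V_apply' [NeZero (2 * m)] (i : Fin (2 * m)) (j l : ℕ) (hj : j < m) (hl : l < m) :
    E0V (k := k) m (bV (k := k) m (i, ⟨j, hj⟩, ⟨l, hl⟩)) =
      bV (k := k) m (i + 1, ⟨j, hj⟩, ⟨l, hl⟩) :=
  E0V_apply (i, ⟨j, hj⟩, ⟨l, hl⟩)

lemma E1V_apply' (i : Fin (2 * m)) (j l : ℕ) (hj : j < m) (hl : l < m) :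
    E1V q m (bV (k := k) m (i, ⟨j, hj⟩, ⟨l, hl⟩)) =
      if h : j + 1 < m then q ^ (i : ℕ) • bV (k := k) m (i, ⟨j + 1, h⟩, ⟨l, hl⟩) else 0 :=
  E1V_apply q (i, ⟨j, hj⟩, ⟨l, hl⟩)

lemma E2V_apply' (i : Fin (2 * m)) (j l : ℕ) (hj : j < m) (hl : l < m) :
    E2V q m (bV (k := k) m (i, ⟨j, hj⟩, ⟨l, hl⟩)) =
      if h : l + 1 < m then q ^ (i : ℕ) • bV (k := k) m (i, ⟨j, hj⟩, ⟨l + 1, h⟩) else 0 :=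
  E2V_apply q (i, ⟨j, hj⟩, ⟨l, hl⟩)

open Fin.NatCast in
lemma E0V_pow [NeZero (2 * m)] (s : ℕ) (p : Ix m) :
    (E0V (k := k) m ^ s) (bV (k := k) m p) = bV (k := k) m (p.1 + (s : Fin (2 * m)), p.2) := by
  induction s with
  | zero => simp
  | succ s ih =>
    rw [pow_succ', Module.End.mul_apply, ih, E0V_apply, Nat.cast_add_one, ← add_assoc]

lemma E1V_pow' (s : ℕ) (i : Fin (2 * m)) (j l : ℕ) (hj : j < m) (hl : l < m) :
    (E1V q m ^ s) (bV (k := k) m (i, ⟨j, hj⟩, ⟨l, hl⟩)) =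
      if h : j + s < m then
        q ^ (s * (i : ℕ)) • bV (k := k) m (i, ⟨j + s, h⟩, ⟨l, hl⟩) else 0 := by
  induction s with
  | zero =>
    rw [pow_zero, Module.End.one_apply, dif_pos (show j + 0 < m by omega)]
    simp
  | succ s ih =>
    rw [pow_succ', Module.End.mul_apply, ih]
    by_cases hc : j + s < m
    · rw [dif_pos hc, map_smul, E1V_apply']
      by_cases hc' : j + s + 1 < m
      · rw [dif_pos hc', dif_pos (show j + (s + 1) < m by omega), smul_smul, ← pow_add,
          (show s * (i : ℕ) + (i : ℕ) = (s + 1) * (i : ℕ) by ring)]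
        rfl
      · rw [dif_neg hc', dif_neg (show ¬ (j + (s + 1) < m) by omega), smul_zero]
    · rw [dif_neg hc, dif_neg (show ¬ (j + (s + 1) < m) by omega), map_zero]

lemma E2V_pow' (s : ℕ) (i : Fin (2 * m)) (j l : ℕ) (hj : j < m) (hl : l < m) :
    (E2V q m ^ s) (bV (k := k) m (i, ⟨j, hj⟩, ⟨l, hl⟩)) =
      if h : l + s < m then
        q ^ (s * (i : ℕ)) • bV (k := k) m (i, ⟨j, hj⟩, ⟨l + s, h⟩) else 0 := by
  induction s with
  | zero =>
    rw [pow_zero, Module.End.one_apply, dif_pos (show l + 0 < m by omega)]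
    simp
  | succ s ih =>
    rw [pow_succ', Module.End.mul_apply, ih]
    by_cases hc : l + s < m
    · rw [dif_pos hc, map_smul, E2V_apply']
      by_cases hc' : l + s + 1 < m
      · rw [dif_pos hc', dif_pos (show l + (s + 1) < m by omega), smul_smul, ← pow_add,
          (show s * (i : ℕ) + (i : ℕ) = (s + 1) * (i : ℕ) by ring)]
        rfl
      · rw [dif_neg hc', dif_neg (show ¬ (l + (s + 1) < m) by omega), smul_zero]
    · rw [dif_neg hc, dif_neg (show ¬ (l + (s + 1) < m) by omega), map_zero]

lemma q_pow_val_add_one [NeZero m] [NeZero (2 * m)] (h1 : q ^ (2 * m) = 1) (a : Fin (2 * m)) :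
    q ^ (((a + 1 : Fin (2 * m))) : ℕ) = q ^ ((a : ℕ) + 1) := by
  have hm : 0 < m := Nat.pos_of_ne_zero (NeZero.ne m)
  have h2 : ((1 : Fin (2 * m)) : ℕ) = 1 := by
    rw [Fin.val_one']
    exact Nat.mod_eq_of_lt (by omega)
  rw [Fin.val_add, h2, pow_mod_eq h1]

lemma op1 [NeZero m] [NeZero (2 * m)] (h1 : q ^ (2 * m) = 1) :
    E1V (k := k) q m * E0V (k := k) m = q • (E0V (k := k) m * E1V (k := k) q m) := by
  refine Module.Basis.ext (bV (k := k) m) ?_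
  rintro ⟨i, ⟨j, hj⟩, ⟨l, hl⟩⟩
  rw [Module.End.mul_apply, LinearMap.smul_apply, Module.End.mul_apply, E0V_apply',
    E1V_apply', E1V_apply']
  by_cases hc : j + 1 < m
  · rw [dif_pos hc, dif_pos hc, map_smul, E0V_apply', smul_smul, ← pow_succ',
      q_pow_val_add_one q h1]
  · rw [dif_neg hc, dif_neg hc, map_zero, smul_zero]

lemma op2 [NeZero m] [NeZero (2 * m)] (h1 : q ^ (2 * m) = 1) :
    E2V (k := k) q m * E0V (k := k) m = q • (E0V (k := k) m * E2V (k := k) q m) := by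
  refine Module.Basis.ext (bV (k := k) m) ?_
  rintro ⟨i, ⟨j, hj⟩, ⟨l, hl⟩⟩
  rw [Module.End.mul_apply, LinearMap.smul_apply, Module.End.mul_apply, E0V_apply',
    E2V_apply', E2V_apply']
  by_cases hc : l + 1 < m
  · rw [dif_pos hc, dif_pos hc, map_smul, E0V_apply', smul_smul, ← pow_succ',
      q_pow_val_add_one q h1]
  · rw [dif_neg hc, dif_neg hc, map_zero, smul_zero]

lemma op3 : E2V (k := k) q m * E1V (k := k) q m = E1V (k := k) q m * E2V (k := k) q m := by
  refine Module.Basis.ext (bV (k := k) m) ?_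
  rintro ⟨i, ⟨j, hj⟩, ⟨l, hl⟩⟩
  rw [Module.End.mul_apply, Module.End.mul_apply, E1V_apply', E2V_apply']
  by_cases hc : j + 1 < m
  · rw [dif_pos hc, map_smul, E2V_apply']
    by_cases hc' : l + 1 < m
    · rw [dif_pos hc', dif_pos hc', map_smul, E1V_apply', dif_pos hc, smul_smul]
    · rw [dif_neg hc', dif_neg hc', smul_zero, map_zero]
  · rw [dif_neg hc, map_zero]
    by_cases hc' : l + 1 < m
    · rw [dif_pos hc', map_smul, E1V_apply', dif_neg hc, smul_zero]
    · rw [dif_neg hc', map_zero]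

lemma op4 [NeZero (2 * m)] : E0V (k := k) m ^ (2 * m) = 1 := by
  refine Module.Basis.ext (bV (k := k) m) ?_
  intro p
  rw [E0V_pow, Module.End.one_apply, Fin.natCast_self, add_zero]

lemma op5 : E1V (k := k) q m ^ m = 0 := by
  refine Module.Basis.ext (bV (k := k) m) ?_
  rintro ⟨i, ⟨j, hj⟩, ⟨l, hl⟩⟩
  rw [E1V_pow', dif_neg (show ¬ (j + m < m) by omega), LinearMap.zero_apply]

lemma op6 : E2V (k := k) q m ^ m = 0 := by
  refine Module.Basis.ext (bV (k := k) m) ?_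
  rintro ⟨i, ⟨j, hj⟩, ⟨l, hl⟩⟩
  rw [E2V_pow', dif_neg (show ¬ (l + m < m) by omega), LinearMap.zero_apply]


lemma fin_one_val [NeZero m] [NeZero (2 * m)] : ((1 : Fin (2 * m)) : ℕ) = 1 := by
  have hm : 0 < m := Nat.pos_of_ne_zero (NeZero.ne m)
  rw [Fin.val_one']
  exact Nat.mod_eq_of_lt (by omega)

/-- The representation of the free algebra on the model space. -/
noncomputable def phi0 [NeZero (2 * m)] :
    FreeAlgebra k (Fin 3) →ₐ[k] Module.End k (Ix m → k) :=
  FreeAlgebra.lift k ![E0V (k := k) m, E1V q m, E2V q m]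

lemma phi0_0 [NeZero (2 * m)] :
    phi0 (k := k) q (m := m) (FreeAlgebra.ι k 0) = E0V (k := k) m := by
  simp [phi0]

lemma phi0_1 [NeZero (2 * m)] :
    phi0 (k := k) q (m := m) (FreeAlgebra.ι k 1) = E1V (k := k) q m := by
  simp [phi0]

lemma phi0_2 [NeZero (2 * m)] :
    phi0 (k := k) q (m := m) (FreeAlgebra.ι k 2) = E2V (k := k) q m := by
  simp [phi0]

lemma phi0_rel [NeZero m] [NeZero (2 * m)] (h1 : q ^ (2 * m) = 1) :
    ∀ ⦃x y⦄, WRel k q m x y → phi0 (k := k) q (m := m) x = phi0 (k := k) q (m := m) y := by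
  intro x y h
  cases h with
  | r1 => rw [map_mul, map_smul, map_mul, phi0_0, phi0_1]; exact op1 q h1
  | r2 => rw [map_mul, map_smul, map_mul, phi0_0, phi0_2]; exact op2 q h1
  | r3 => rw [map_mul, map_mul, phi0_1, phi0_2]; exact op3 q
  | r4 => rw [map_pow, map_one, phi0_0]; exact op4
  | r5 => rw [map_pow, map_zero, phi0_1]; exact op5 q
  | r6 => rw [map_pow, map_zero, phi0_2]; exact op6 q

/-- The representation of `W` on the model space. -/
noncomputable def phiW [NeZero m] [NeZero (2 * m)] (h1 : q ^ (2 * m) = 1) :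
    Walg k q m →ₐ[k] Module.End k (Ix m → k) :=
  RingQuot.liftAlgHom k ⟨phi0 (k := k) q (m := m), phi0_rel q h1⟩

lemma phiW_mk [NeZero m] [NeZero (2 * m)] (h1 : q ^ (2 * m) = 1) (x : FreeAlgebra k (Fin 3)) :
    phiW q h1 (RingQuot.mkAlgHom k (WRel k q m) x) = phi0 (k := k) q (m := m) x :=
  RingQuot.liftAlgHom_mkAlgHom_apply _ _ _ _

lemma phiW_mono [NeZero m] [NeZero (2 * m)] (h1 : q ^ (2 * m) = 1) (hm0 : 0 < m) (p : Ix m) :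
    phiW q h1 (Wmono q m p) (bV (k := k) m (0, ⟨0, hm0⟩, ⟨0, hm0⟩)) = bV (k := k) m p := by
  obtain ⟨i, ⟨j, hj⟩, ⟨l, hl⟩⟩ := p
  have h0 : phiW q h1 (Wgen k q m 0) = E0V (k := k) m := by rw [Wgen, phiW_mk, phi0_0]
  have h1' : phiW q h1 (Wgen k q m 1) = E1V (k := k) q m := by rw [Wgen, phiW_mk, phi0_1]
  have h2' : phiW q h1 (Wgen k q m 2) = E2V (k := k) q m := by rw [Wgen, phiW_mk, phi0_2]
  rw [Wmono, map_mul, map_mul, map_pow, map_pow, map_pow, h0, h1', h2',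
    Module.End.mul_apply, Module.End.mul_apply, E2V_pow',
    dif_pos (show (0 : ℕ) + l < m by omega), map_smul, E1V_pow',
    dif_pos (show (0 : ℕ) + j < m by omega), map_smul, map_smul, E0V_pow]
  simp [Fin.cast_val_eq_self]

lemma wmono_li [NeZero m] [NeZero (2 * m)] (h1 : q ^ (2 * m) = 1) :
    LinearIndependent k (Wmono (k := k) q m) := by
  rw [linearIndependent_iff']
  intro s g hg p hp
  have hm0 : 0 < m := Nat.pos_of_ne_zero (NeZero.ne m)
  have h2 := congrArg (phiW q h1) hg
  rw [map_sum, map_zero] at h2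
  have h3 := congrArg
    (fun T : Module.End k (Ix m → k) => T (bV (k := k) m (0, ⟨0, hm0⟩, ⟨0, hm0⟩))) h2
  simp only [map_smul, LinearMap.sum_apply, LinearMap.smul_apply, LinearMap.zero_apply,
    phiW_mono q h1 hm0] at h3
  exact linearIndependent_iff'.mp (bV (k := k) m).linearIndependent s g h3 p hp

lemma adjoin_gen_top : Algebra.adjoin k (Set.range (Wgen k q m)) = ⊤ := by
  have h2 : Set.range (Wgen k q m) =
      (RingQuot.mkAlgHom k (WRel k q m)) '' (Set.range (FreeAlgebra.ι k)) := by
    rw [← Set.range_comp]; rfl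
  rw [h2, ← AlgHom.map_adjoin, FreeAlgebra.adjoin_range_ι, Algebra.map_top]
  rw [AlgHom.range_eq_top]
  exact RingQuot.mkAlgHom_surjective k _

lemma span_mono [NeZero m] [NeZero (2 * m)] :
    Submodule.span k (Set.range (Wmono (k := k) q m)) = ⊤ := by
  set S := Submodule.span k (Set.range (Wmono (k := k) q m)) with hS
  have hm0 : 0 < m := Nat.pos_of_ne_zero (NeZero.ne m)
  have h1mem : (1 : Walg k q m) ∈ S := by
    apply Submodule.subset_span
    exact ⟨((0 : Fin (2 * m)), (0 : Fin m), (0 : Fin m)), by simp [Wmono]⟩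
  have hg0 : ∀ p : Ix m, Wgen k q m 0 * Wmono q m p ∈ S := by
    intro p
    have hv : Wgen k q m 0 ^ (((p.1 + 1 : Fin (2 * m))) : ℕ) =
        Wgen k q m 0 ^ ((p.1 : ℕ) + 1) := by
      rw [Fin.val_add, fin_one_val, pow_mod_eq rel4]
    have heq : Wgen k q m 0 * Wmono q m p = Wmono q m (p.1 + 1, p.2) := by
      rw [Wmono, Wmono, ← mul_assoc, ← mul_assoc, ← pow_succ', ← hv]
    rw [heq]
    exact Submodule.subset_span ⟨_, rfl⟩
  have hg1 : ∀ p : Ix m, Wgen k q m 1 * Wmono q m p ∈ S := by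
    rintro ⟨i, ⟨j, hj⟩, ⟨l, hl⟩⟩
    have hstep : Wgen k q m 1 *
        (Wgen k q m 0 ^ (i : ℕ) * Wgen k q m 1 ^ j * Wgen k q m 2 ^ l) =
        q ^ (i : ℕ) •
          (Wgen k q m 0 ^ (i : ℕ) * Wgen k q m 1 ^ (j + 1) * Wgen k q m 2 ^ l) := by
      rw [← mul_assoc, ← mul_assoc, comm_pow_left rel1 (i : ℕ), smul_mul_assoc,
        smul_mul_assoc, mul_assoc (Wgen k q m 0 ^ (i : ℕ)) (Wgen k q m 1)
          (Wgen k q m 1 ^ j), ← pow_succ']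
    have h1' : Wgen k q m 1 * Wmono q m (i, ⟨j, hj⟩, ⟨l, hl⟩) =
        q ^ (i : ℕ) •
          (Wgen k q m 0 ^ (i : ℕ) * Wgen k q m 1 ^ (j + 1) * Wgen k q m 2 ^ l) := hstep
    rw [h1']
    by_cases hc : j + 1 < m
    · exact S.smul_mem _ (Submodule.subset_span ⟨(i, ⟨j + 1, hc⟩, ⟨l, hl⟩), rfl⟩)
    · rw [show j + 1 = m by omega, rel5, mul_zero, zero_mul, smul_zero]
      exact S.zero_mem
  have hg2 : ∀ p : Ix m, Wgen k q m 2 * Wmono q m p ∈ S := by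
    rintro ⟨i, ⟨j, hj⟩, ⟨l, hl⟩⟩
    have hstep : Wgen k q m 2 *
        (Wgen k q m 0 ^ (i : ℕ) * Wgen k q m 1 ^ j * Wgen k q m 2 ^ l) =
        q ^ (i : ℕ) •
          (Wgen k q m 0 ^ (i : ℕ) * Wgen k q m 1 ^ j * Wgen k q m 2 ^ (l + 1)) := by
      rw [← mul_assoc, ← mul_assoc, comm_pow_left rel2 (i : ℕ), smul_mul_assoc,
        smul_mul_assoc, mul_assoc (Wgen k q m 0 ^ (i : ℕ)) (Wgen k q m 2)
          (Wgen k q m 1 ^ j),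
        (Commute.pow_right (show Commute (Wgen k q m 2) (Wgen k q m 1) from rel3) j).eq,
        ← mul_assoc,
        mul_assoc (Wgen k q m 0 ^ (i : ℕ) * Wgen k q m 1 ^ j) (Wgen k q m 2)
          (Wgen k q m 2 ^ l), ← pow_succ']
    have h2' : Wgen k q m 2 * Wmono q m (i, ⟨j, hj⟩, ⟨l, hl⟩) =
        q ^ (i : ℕ) •
          (Wgen k q m 0 ^ (i : ℕ) * Wgen k q m 1 ^ j * Wgen k q m 2 ^ (l + 1)) := hstep
    rw [h2']
    by_cases hc : l + 1 < m
    · exact S.smul_mem _ (Submodule.subset_span ⟨(i, ⟨j, hj⟩, ⟨l + 1, hc⟩), rfl⟩)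
    · rw [show l + 1 = m by omega, rel6, mul_zero, smul_zero]
      exact S.zero_mem
  have hmul : ∀ x ∈ Algebra.adjoin k (Set.range (Wgen k q m)), ∀ y ∈ S, x * y ∈ S := by
    intro x hx
    induction hx using Algebra.adjoin_induction with
    | mem x hx =>
      obtain ⟨t, rfl⟩ := hx
      intro y hy
      induction hy using Submodule.span_induction with
      | mem y hy =>
        obtain ⟨p, rfl⟩ := hy
        fin_cases t
        exacts [hg0 p, hg1 p, hg2 p]
      | zero => rw [mul_zero]; exact S.zero_mem
      | add a b _ _ ha hb => rw [mul_add]; exact S.add_mem ha hb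
      | smul c a _ ha => rw [mul_smul_comm]; exact S.smul_mem _ ha
    | algebraMap r =>
      intro y hy
      rw [← Algebra.smul_def]
      exact S.smul_mem _ hy
    | add x z hx hz ihx ihz =>
      intro y hy
      rw [add_mul]
      exact S.add_mem (ihx y hy) (ihz y hy)
    | mul x z hx hz ihx ihz =>
      intro y hy
      rw [mul_assoc]
      exact ihx _ (ihz y hy)
  rw [eq_top_iff]
  intro x _
  have := hmul x (by rw [adjoin_gen_top]; trivial) 1 h1mem
  rwa [mul_one] at this

end Rep


section Conj

variable (q : k) (m : ℕ)

lemma conj_mono [NeZero m] [NeZero (2 * m)] (p : Ix m) :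
    Wgen k q m 0 ^ (2 * m - 1) * Wmono q m p * Wgen k q m 0 =
      q ^ ((p.2.1 : ℕ) + (p.2.2 : ℕ)) • Wmono q m p := by
  obtain ⟨i, ⟨j, hj⟩, ⟨l, hl⟩⟩ := p
  have hm0 : 0 < m := Nat.pos_of_ne_zero (NeZero.ne m)
  have h1 : Wmono q m (i, ⟨j, hj⟩, ⟨l, hl⟩) * Wgen k q m 0 =
      (q ^ l * q ^ j) •
        (Wgen k q m 0 ^ ((i : ℕ) + 1) * Wgen k q m 1 ^ j * Wgen k q m 2 ^ l) := by
    show Wgen k q m 0 ^ (i : ℕ) * Wgen k q m 1 ^ j * Wgen k q m 2 ^ l * Wgen k q m 0 = _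
    rw [mul_assoc (Wgen k q m 0 ^ (i : ℕ) * Wgen k q m 1 ^ j) (Wgen k q m 2 ^ l)
      (Wgen k q m 0), comm_pow_right rel2 l, mul_smul_comm,
      ← mul_assoc (Wgen k q m 0 ^ (i : ℕ) * Wgen k q m 1 ^ j) (Wgen k q m 0)
        (Wgen k q m 2 ^ l),
      mul_assoc (Wgen k q m 0 ^ (i : ℕ)) (Wgen k q m 1 ^ j) (Wgen k q m 0),
      comm_pow_right rel1 j, mul_smul_comm, smul_mul_assoc, smul_smul,
      ← mul_assoc (Wgen k q m 0 ^ (i : ℕ)) (Wgen k q m 0) (Wgen k q m 1 ^ j),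
      ← pow_succ]
  rw [mul_assoc, h1, mul_smul_comm,
    ← mul_assoc (Wgen k q m 0 ^ (2 * m - 1))
      (Wgen k q m 0 ^ ((i : ℕ) + 1) * Wgen k q m 1 ^ j) (Wgen k q m 2 ^ l),
    ← mul_assoc (Wgen k q m 0 ^ (2 * m - 1)) (Wgen k q m 0 ^ ((i : ℕ) + 1))
      (Wgen k q m 1 ^ j),
    ← pow_add (Wgen k q m 0) (2 * m - 1) ((i : ℕ) + 1),
    show 2 * m - 1 + ((i : ℕ) + 1) = 2 * m + (i : ℕ) by omega,
    pow_add (Wgen k q m 0) (2 * m) (i : ℕ), rel4, one_mul,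
    mul_comm (q ^ l) (q ^ j), ← pow_add]
  rfl

lemma conj_pow_mono [NeZero m] [NeZero (2 * m)] (s : ℕ) (p : Ix m) :
    (Wgen k q m 0 ^ (2 * m - 1)) ^ s * Wmono q m p * Wgen k q m 0 ^ s =
      q ^ (((p.2.1 : ℕ) + (p.2.2 : ℕ)) * s) • Wmono q m p := by
  induction s with
  | zero => simp
  | succ s ih =>
    rw [pow_succ (Wgen k q m 0 ^ (2 * m - 1)) s, pow_succ' (Wgen k q m 0) s,
      mul_assoc ((Wgen k q m 0 ^ (2 * m - 1)) ^ s) (Wgen k q m 0 ^ (2 * m - 1))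
        (Wmono q m p),
      ← mul_assoc ((Wgen k q m 0 ^ (2 * m - 1)) ^ s *
        (Wgen k q m 0 ^ (2 * m - 1) * Wmono q m p)) (Wgen k q m 0) (Wgen k q m 0 ^ s),
      mul_assoc ((Wgen k q m 0 ^ (2 * m - 1)) ^ s)
        (Wgen k q m 0 ^ (2 * m - 1) * Wmono q m p) (Wgen k q m 0),
      mul_assoc (Wgen k q m 0 ^ (2 * m - 1)) (Wmono q m p) (Wgen k q m 0),
      ← mul_assoc (Wgen k q m 0 ^ (2 * m - 1)) (Wmono q m p) (Wgen k q m 0),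
      conj_mono q m p, mul_smul_comm, smul_mul_assoc, ih, smul_smul, ← pow_add,
      show (p.2.1 : ℕ) + (p.2.2 : ℕ) + ((p.2.1 : ℕ) + (p.2.2 : ℕ)) * s =
        ((p.2.1 : ℕ) + (p.2.2 : ℕ)) * (s + 1) by ring]

lemma vandermonde (hq : IsPrimitiveRoot q (2 * m)) (hm0 : 0 < m) {d e : ℕ}
    (hd : d < 2 * m) (he : e < 2 * m) :
    (((2 * m : ℕ) : k))⁻¹ * ∑ s ∈ Finset.range (2 * m), q ^ ((2 * m - d) * s) * q ^ (e * s) =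
      if e = d then 1 else 0 := by
  haveI : NeZero (2 * m) := ⟨by omega⟩
  haveI := hq.neZero'
  have hcast : (((2 * m : ℕ)) : k) ≠ 0 := NeZero.ne _
  have hsum : ∑ s ∈ Finset.range (2 * m), q ^ ((2 * m - d) * s) * q ^ (e * s)
      = ∑ s ∈ Finset.range (2 * m), (q ^ (2 * m - d + e)) ^ s := by
    refine Finset.sum_congr rfl fun s _ => ?_
    rw [← pow_add, ← add_mul, pow_mul]
  rw [hsum]
  by_cases hede : e = d
  · subst hede
    have hone : q ^ (2 * m - e + e) = 1 := by
      rw [Nat.sub_add_cancel (by omega)]; exact hq.pow_eq_one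
    rw [hone, if_pos rfl]
    simp only [one_pow, Finset.sum_const, Finset.card_range, nsmul_eq_mul, mul_one]
    exact inv_mul_cancel₀ hcast
  · have hne1 : q ^ (2 * m - d + e) ≠ 1 := fun h => by
      have hdvd := (hq.pow_eq_one_iff_dvd _).mp h
      have h1' : 2 * m ≤ 2 * m - d + e := Nat.le_of_dvd (by omega) hdvd
      have h3' : 2 * m - d + e = 2 * m := by
        obtain ⟨c, hc⟩ := hdvd
        rcases c with _ | c
        · omega
        · rcases c with _ | c
          · omega
          · have h4' : 2 * m * 2 ≤ 2 * m * (c + 1 + 1) :=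
              Nat.mul_le_mul_left _ (by omega)
            omega
      exact hede (by omega)
    rw [geom_sum_eq hne1, if_neg hede]
    have hpow : (q ^ (2 * m - d + e)) ^ (2 * m) = 1 := by
      rw [← pow_mul, mul_comm, pow_mul, hq.pow_eq_one, one_pow]
    rw [hpow, sub_self, zero_div, mul_zero]

end Conj

end Stmt18Aux

/-- `W` has `k`-basis `{e₁₁ⁱ e₁₂ʲ e₂₁ˡ : 0 ≤ i < 2m, 0 ≤ j, l < m}`, hence
`dim_k W = 2m³`; moreover (with respect to the grading `deg e₁₁ = 0`,
`deg e₁₂ = deg e₂₁ = 1`) every two-sided ideal of `W` is graded: it contains all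
homogeneous components of each of its elements. -/
theorem stmt18 {k : Type*} [Field k] (m : ℕ) (hm : 0 < m)
    (q : k) (hq : IsPrimitiveRoot q (2 * m)) :
    ∃ B : Module.Basis (Fin (2 * m) × Fin m × Fin m) k (Walg k q m),
      (∀ p : Fin (2 * m) × Fin m × Fin m,
        B p = Wgen k q m 0 ^ (p.1 : ℕ) * Wgen k q m 1 ^ (p.2.1 : ℕ) *
          Wgen k q m 2 ^ (p.2.2 : ℕ)) ∧
      Module.finrank k (Walg k q m) = 2 * m ^ 3 ∧
      ∀ I : TwoSidedIdeal (Walg k q m), ∀ f ∈ I, ∀ d : ℕ,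
        (∑ p ∈ Finset.univ.filter
            (fun p : Fin (2 * m) × Fin m × Fin m => (p.2.1 : ℕ) + (p.2.2 : ℕ) = d),
          B.repr f p • B p) ∈ I := by
  classical
  haveI : NeZero m := ⟨hm.ne'⟩
  haveI : NeZero (2 * m) := ⟨by omega⟩
  have h1 : q ^ (2 * m) = 1 := hq.pow_eq_one
  let B : Module.Basis (Fin (2 * m) × Fin m × Fin m) k (Walg k q m) :=
    Module.Basis.mk (Stmt18Aux.wmono_li q h1) (Stmt18Aux.span_mono q (m := m)).ge
  have hB : ∀ p, B p = Stmt18Aux.Wmono q m p := fun p => Module.Basis.mk_apply _ _ p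
  refine ⟨B, fun p => hB p, ?_, ?_⟩
  · rw [Module.finrank_eq_card_basis B]
    simp only [Fintype.card_prod, Fintype.card_fin]
    ring
  · intro I f hf d
    by_cases hd : d < 2 * m
    · have hTmem : ∀ s : ℕ,
          (Wgen k q m 0 ^ (2 * m - 1)) ^ s * f * Wgen k q m 0 ^ s ∈ I :=
        fun s => I.mul_mem_right _ _ (I.mul_mem_left _ _ hf)
      have hstep : ∀ s : ℕ,
          (Wgen k q m 0 ^ (2 * m - 1)) ^ s * f * Wgen k q m 0 ^ s =
            ∑ p : Fin (2 * m) × Fin m × Fin m,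
              (B.repr f p * q ^ (((p.2.1 : ℕ) + (p.2.2 : ℕ)) * s)) • B p := by
        intro s
        conv_lhs => rw [← B.sum_repr f]
        rw [Finset.mul_sum, Finset.sum_mul]
        refine Finset.sum_congr rfl fun p _ => ?_
        rw [hB p, mul_smul_comm, smul_mul_assoc, Stmt18Aux.conj_pow_mono q m s p,
          smul_smul]
      have key : (∑ p ∈ Finset.univ.filter
            (fun p : Fin (2 * m) × Fin m × Fin m => (p.2.1 : ℕ) + (p.2.2 : ℕ) = d),
            B.repr f p • B p) =
          ∑ s ∈ Finset.range (2 * m),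
            ((((2 * m : ℕ)) : k)⁻¹ * q ^ ((2 * m - d) * s)) •
              ((Wgen k q m 0 ^ (2 * m - 1)) ^ s * f * Wgen k q m 0 ^ s) := by
        symm
        calc ∑ s ∈ Finset.range (2 * m),
              ((((2 * m : ℕ)) : k)⁻¹ * q ^ ((2 * m - d) * s)) •
                ((Wgen k q m 0 ^ (2 * m - 1)) ^ s * f * Wgen k q m 0 ^ s)
            = ∑ s ∈ Finset.range (2 * m), ∑ p : Fin (2 * m) × Fin m × Fin m,
                ((((2 * m : ℕ)) : k)⁻¹ * q ^ ((2 * m - d) * s) *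
                  (B.repr f p * q ^ (((p.2.1 : ℕ) + (p.2.2 : ℕ)) * s))) • B p := by
              refine Finset.sum_congr rfl fun s _ => ?_
              rw [hstep s, Finset.smul_sum]
              refine Finset.sum_congr rfl fun p _ => ?_
              rw [smul_smul]
          _ = ∑ p : Fin (2 * m) × Fin m × Fin m, ∑ s ∈ Finset.range (2 * m),
                ((((2 * m : ℕ)) : k)⁻¹ * q ^ ((2 * m - d) * s) *
                  (B.repr f p * q ^ (((p.2.1 : ℕ) + (p.2.2 : ℕ)) * s))) • B p :=
              Finset.sum_comm
          _ = ∑ p : Fin (2 * m) × Fin m × Fin m,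
                (if (p.2.1 : ℕ) + (p.2.2 : ℕ) = d then B.repr f p else 0) • B p := by
              refine Finset.sum_congr rfl fun p _ => ?_
              rw [← Finset.sum_smul]
              congr 1
              have he : (p.2.1 : ℕ) + (p.2.2 : ℕ) < 2 * m := by
                have := p.2.1.isLt
                have := p.2.2.isLt
                omega
              have hv := Stmt18Aux.vandermonde q m hq hm hd he
              calc ∑ s ∈ Finset.range (2 * m),
                    ((((2 * m : ℕ)) : k)⁻¹ * q ^ ((2 * m - d) * s) *
                      (B.repr f p * q ^ (((p.2.1 : ℕ) + (p.2.2 : ℕ)) * s)))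
                  = B.repr f p * ((((2 * m : ℕ)) : k)⁻¹ *
                      ∑ s ∈ Finset.range (2 * m),
                        q ^ ((2 * m - d) * s) * q ^ (((p.2.1 : ℕ) + (p.2.2 : ℕ)) * s)) := by
                    rw [Finset.mul_sum, Finset.mul_sum]
                    exact Finset.sum_congr rfl fun s _ => by ring
                _ = B.repr f p *
                      (if (p.2.1 : ℕ) + (p.2.2 : ℕ) = d then 1 else 0) := by rw [hv]
                _ = if (p.2.1 : ℕ) + (p.2.2 : ℕ) = d then B.repr f p else 0 := by
                    split_ifs <;> simp
          _ = ∑ p ∈ Finset.univ.filter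
                (fun p : Fin (2 * m) × Fin m × Fin m => (p.2.1 : ℕ) + (p.2.2 : ℕ) = d),
                B.repr f p • B p := by
              rw [Finset.sum_filter]
              refine Finset.sum_congr rfl fun p _ => ?_
              rw [ite_smul, zero_smul]
      rw [key]
      refine TwoSidedIdeal.finsetSum_mem I _ _ fun s _ => ?_
      rw [Algebra.smul_def]
      exact I.mul_mem_left _ _ (hTmem s)
    · have hempty : Finset.univ.filter
          (fun p : Fin (2 * m) × Fin m × Fin m => (p.2.1 : ℕ) + (p.2.2 : ℕ) = d) = ∅ := by
        refine Finset.filter_false_of_mem fun p _ => ?_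
        have := p.2.1.isLt
        have := p.2.2.isLt
        omega
      rw [hempty, Finset.sum_empty]
      exact I.zero_mem
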